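/- Let G be a connected r-regular finite simple graph on n vertices and let λ_k be the smallest eigenvalue of its adjacency matrix. Then for every subset A ⊆ V, the cut size satisfies e(A, V∖A) ≤ (r − λ_k)·n/4. -/

import Mathlib

open Finset
open scoped Classical
open Matrix

/-- The maximum cut size of a connected r-regular graph is at most
`(r - λ_k)·n/4`, where `λ_k` is the smallest eigenvalue. -/
theorem max_cut_size_bound
    {V : Type*} [Fintype V] (G : SimpleGraph V) [DecidableRel G.Adj]
    (r : ℕ) (hconn : G.Connected) (hreg : G.IsRegularOfDegree r)
    (lamk : ℝ)
    (hkeig : ∃ g : V → ℝ, g ≠ 0 ∧ (G.adjMatrix ℝ).mulVec g = lamk • g)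
    (hkmin : ∀ μ : ℝ,
      (∃ g : V → ℝ, g ≠ 0 ∧ (G.adjMatrix ℝ).mulVec g = μ • g) → lamk ≤ μ)
    (A : Finset V) :
    (∑ x ∈ A, ((Aᶜ.filter fun y => G.Adj x y).card : ℝ))
      ≤ ((r : ℝ) - lamk) * Fintype.card V / 4 := by
  classical
  set M : Matrix V V ℝ := G.adjMatrix ℝ with hMdef
  set N : Matrix V V ℝ := M - lamk • 1 with hNdef
  have hM : M.IsHermitian := by
    rw [Matrix.IsHermitian]
    ext i j
    simp [Matrix.conjTranspose_apply, hMdef, G.adj_comm]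
  have hN : N.IsHermitian := by
    refine hM.sub ?_
    rw [Matrix.IsHermitian]
    ext i j
    by_cases h : i = j
    · simp [Matrix.one_apply, h]
    · simp [Matrix.one_apply, h, Ne.symm h]
  -- all eigenvalues of N are nonnegative
  have heig : ∀ i, 0 ≤ hN.eigenvalues i := by
    intro i
    have hv : N *ᵥ ⇑(hN.eigenvectorBasis i) = hN.eigenvalues i • ⇑(hN.eigenvectorBasis i) :=
      hN.mulVec_eigenvectorBasis i
    have hne : (⇑(hN.eigenvectorBasis i) : V → ℝ) ≠ 0 := by
      have := hN.eigenvectorBasis.orthonormal.ne_zero i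
      exact fun h => this (by ext x; exact congrFun h x)
    have hMv : M *ᵥ ⇑(hN.eigenvectorBasis i)
        = (hN.eigenvalues i + lamk) • ⇑(hN.eigenvectorBasis i) := by
      have : M *ᵥ ⇑(hN.eigenvectorBasis i)
          = N *ᵥ ⇑(hN.eigenvectorBasis i) + lamk • ⇑(hN.eigenvectorBasis i) := by
        simp [hNdef, Matrix.sub_mulVec, Matrix.smul_mulVec, Matrix.one_mulVec]
      rw [this, hv, add_smul]
    have := hkmin (hN.eigenvalues i + lamk) ⟨_, hne, hMv⟩
    linarith
  have hpsd : N.PosSemidef := hN.posSemidef_iff_eigenvalues_nonneg.mpr heig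
  -- the ±1 vector of A
  set f : V → ℝ := fun x => if x ∈ A then 1 else -1 with hfdef
  have hkey : 0 ≤ f ⬝ᵥ N *ᵥ f := by
    have := hpsd.dotProduct_mulVec_nonneg f
    simpa using this
  have hff : f ⬝ᵥ f = (Fintype.card V : ℝ) := by
    simp only [dotProduct, hfdef]
    rw [← Finset.card_univ, Finset.card_eq_sum_ones, Nat.cast_sum]
    refine Finset.sum_congr rfl fun x _ => ?_
    by_cases hx : x ∈ A <;> simp [hx]
  -- quadratic form of M at f
  set S : ℝ := ∑ x ∈ A, ((Aᶜ.filter fun y => G.Adj x y).card : ℝ) with hSdef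
  have hEAc : ∀ (B C : Finset V),
      (∑ x ∈ B, ∑ y ∈ C, M x y) = ∑ x ∈ B, ((C.filter fun y => G.Adj x y).card : ℝ) := by
    intro B C
    refine Finset.sum_congr rfl fun x _ => ?_
    simp [hMdef, SimpleGraph.adjMatrix_apply, Finset.sum_boole, Finset.filter_comm]
  have hsym : (∑ x ∈ Aᶜ, ∑ y ∈ A, M x y) = ∑ x ∈ A, ∑ y ∈ Aᶜ, M x y := by
    rw [Finset.sum_comm (f := fun x y => M x y)]
    refine Finset.sum_congr rfl fun x _ => Finset.sum_congr rfl fun y _ => ?_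
    simp [hMdef, SimpleGraph.adjMatrix_apply, G.adj_comm]
  have hrowsum : ∀ x, (∑ y, M x y) = (r : ℝ) := by
    intro x
    have : (∑ y, M x y) = (G.degree x : ℝ) := by
      simp [hMdef, SimpleGraph.adjMatrix_apply, Finset.sum_boole, SimpleGraph.degree,
        SimpleGraph.neighborFinset_eq_filter]
    rw [this, hreg x]
  have htot : (∑ x, ∑ y, M x y) = (r : ℝ) * Fintype.card V := by
    simp [hrowsum, Finset.sum_const, mul_comm]
  have hQ : f ⬝ᵥ M *ᵥ f = (r : ℝ) * Fintype.card V - 4 * S := by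
    have expand : f ⬝ᵥ M *ᵥ f = ∑ x, ∑ y, f x * (M x y * f y) := by
      simp [dotProduct, Matrix.mulVec, Finset.mul_sum]
    rw [expand]
    have hsplit : ∀ g : V → ℝ, (∑ x, g x) = ∑ x ∈ A, g x + ∑ x ∈ Aᶜ, g x := by
      intro g; rw [Finset.sum_add_sum_compl]
    rw [hsplit]
    have h1 : (∑ x ∈ A, ∑ y, f x * (M x y * f y))
        = (∑ x ∈ A, ∑ y ∈ A, M x y) - ∑ x ∈ A, ∑ y ∈ Aᶜ, M x y := by
      rw [← Finset.sum_sub_distrib]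
      refine Finset.sum_congr rfl fun x hx => ?_
      rw [hsplit (fun y => f x * (M x y * f y))]
      congr 1
      · refine Finset.sum_congr rfl fun y hy => by simp [hfdef, hx, hy]
      · rw [← Finset.sum_neg_distrib]
        refine Finset.sum_congr rfl fun y hy => ?_
        have hy' : y ∉ A := Finset.mem_compl.mp hy
        simp [hfdef, hx, hy']
    have h2 : (∑ x ∈ Aᶜ, ∑ y, f x * (M x y * f y))
        = (∑ x ∈ Aᶜ, ∑ y ∈ Aᶜ, M x y) - ∑ x ∈ Aᶜ, ∑ y ∈ A, M x y := by
      rw [← Finset.sum_sub_distrib]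
      refine Finset.sum_congr rfl fun x hx => ?_
      have hx' : x ∉ A := Finset.mem_compl.mp hx
      rw [hsplit (fun y => f x * (M x y * f y)), add_comm]
      congr 1
      · refine Finset.sum_congr rfl fun y hy => by
          have hy' : y ∉ A := Finset.mem_compl.mp hy
          simp [hfdef, hx', hy']
      · rw [← Finset.sum_neg_distrib]
        refine Finset.sum_congr rfl fun y hy => by simp [hfdef, hx', hy]
    rw [h1, h2]
    have hrow : ∀ x, (∑ y ∈ A, M x y) + ∑ y ∈ Aᶜ, M x y = (r : ℝ) := fun x => by
      rw [Finset.sum_add_sum_compl]; exact hrowsum x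
    have hA1 : (∑ x ∈ A, ∑ y ∈ A, M x y) + ∑ x ∈ A, ∑ y ∈ Aᶜ, M x y
        = (A.card : ℝ) * r := by
      rw [← Finset.sum_add_distrib]
      simp [hrow, mul_comm]
    have hA2 : (∑ x ∈ Aᶜ, ∑ y ∈ A, M x y) + ∑ x ∈ Aᶜ, ∑ y ∈ Aᶜ, M x y
        = ((Aᶜ.card : ℕ) : ℝ) * r := by
      rw [← Finset.sum_add_distrib]
      simp [hrow, mul_comm]
    have hcard : ((A.card : ℕ) : ℝ) + ((Aᶜ.card : ℕ) : ℝ) = Fintype.card V := by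
      rw [← Nat.cast_add, Finset.card_add_card_compl]
    have hS' : (∑ x ∈ A, ∑ y ∈ Aᶜ, M x y) = S := hEAc A Aᶜ
    rw [hsym] at hA2 ⊢
    rw [hS'] at hA1 hA2 ⊢
    nlinarith [hA1, hA2, hcard]
  have hNf : f ⬝ᵥ N *ᵥ f = f ⬝ᵥ M *ᵥ f - lamk * (Fintype.card V : ℝ) := by
    rw [hNdef]
    rw [Matrix.sub_mulVec, dotProduct_sub, Matrix.smul_mulVec,
      Matrix.one_mulVec, dotProduct_smul, smul_eq_mul, hff]
  rw [hNf, hQ] at hkey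
  linarith
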